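/- For every positive integer n that is coprime to p i for every index i, the n-th iterate R^[n] (which is the translation by n • g) is ergodic with respect to μ. -/

import Mathlib

open MeasureTheory

/-- With `X = ∏ i, ZMod (p i)` (the `p i` pairwise distinct primes),
`μ` its Haar probability measure and `R x = x + g` the translation by the element `g`
with all coordinates `1`: for every positive integer `n` coprime to every `p i`, the
iterate `R^[n]` (the translation by `n • g`) is ergodic with respect to `μ`. -/
theorem translation_power_coprime_ergodic
    (p : ℕ → ℕ) (hp : ∀ i, (p i).Prime) (hinj : Function.Injective p)
    (μ : Measure (∀ i, ZMod (p i))) [IsProbabilityMeasure μ]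
    (hμ : ∀ x : ∀ i, ZMod (p i), μ.map (fun y => y + x) = μ)
    (g : ∀ i, ZMod (p i)) (hg : ∀ i, g i = 1)
    (n : ℕ) (hn : 0 < n) (hcop : ∀ i, Nat.Coprime n (p i)) :
    Ergodic ((fun x => x + g)^[n]) μ := by
  haveI : ∀ i, Fact (p i).Prime := fun i => ⟨hp i⟩
  haveI : μ.IsAddLeftInvariant := ⟨fun x => by
    rw [show ((x + ·) : _ → _) = fun y => y + x from funext fun y => add_comm x y]
    exact hμ x⟩
  have key : ∀ (m : ℕ) (x : ∀ i, ZMod (p i)), (fun x => x + g)^[m] x = m • g + x := by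
    intro m
    induction m with
    | zero => simp
    | succ m ih =>
      intro x
      rw [Function.iterate_succ_apply', ih, succ_nsmul]
      abel
  have hiter : (fun x => x + g)^[n] = fun x : ∀ i, ZMod (p i) => (n • g) + x :=
    funext (key n)
  have hv : DenseRange (fun k : ℕ => k • (n • g)) := by
    intro x
    rw [mem_closure_iff]
    intro U hU hxU
    obtain ⟨I, u, hu, hsub⟩ := isOpen_pi_iff.mp hU x hxU
    set a : ℕ → ℕ := fun i => ((n : ZMod (p i))⁻¹ * x i).val with ha
    have hne : ∀ i, (n : ZMod (p i)) ≠ 0 := by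
      intro i h
      rw [ZMod.natCast_eq_zero_iff] at h
      exact ((hp i).coprime_iff_not_dvd.mp (hcop i).symm) h
    obtain ⟨k, hk⟩ := Nat.chineseRemainderOfFinset a p I
      (fun i _ => (hp i).pos.ne') (fun i _ j _ hij =>
        (Nat.coprime_primes (hp i) (hp j)).mpr (fun h => hij (hinj h)))
    refine ⟨k • (n • g), hsub fun i hi => ?_, ⟨k, rfl⟩⟩
    have : (k • (n • g)) i = x i := by
      have hki : (k : ZMod (p i)) = ((a i : ℕ) : ZMod (p i)) :=
        (ZMod.natCast_eq_natCast_iff _ _ _).mpr (hk i hi)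
      have : (k • (n • g)) i = (k : ZMod (p i)) * ((n : ZMod (p i)) * g i) := by
        simp [nsmul_eq_mul, mul_assoc]
      rw [this, hki, hg i, mul_one, ha]
      simp only [ZMod.natCast_val, ZMod.cast_id]
      field_simp
      rw [mul_comm, mul_div_assoc, div_self (hne i), mul_one]
    rw [this]
    exact (hu i hi).2
  have := ergodic_add_left_of_denseRange_nsmul hv μ
  rwa [hiter]
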